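/- If A is an m×n real matrix such that x = 0 is the only solution of the system {x ≥ 0, Ax ≤ 0}, then there exists a vector u ∈ ℝ^m with u > 0 (componentwise) and Aᵀu > 0 (componentwise). -/

import Mathlib

theorem stmt_0 (m n : ℕ) (A : Matrix (Fin m) (Fin n) ℝ)
    (h : ∀ x : Fin n → ℝ, (∀ j, 0 ≤ x j) → (∀ i, A.mulVec x i ≤ 0) → x = 0) :
    ∃ u : Fin m → ℝ, (∀ i, 0 < u i) ∧ ∀ j, 0 < A.transpose.mulVec u j := by
  classical
  -- the generating vectors: columns of A and standard basis vectors
  set g : Fin n ⊕ Fin m → (Fin m → ℝ) :=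
    Sum.elim (fun j => fun i => A i j) (fun i => (Pi.single i 1 : Fin m → ℝ)) with hg
  set S : Set (Fin m → ℝ) := Set.range g with hS
  have hSfin : S.Finite := Set.finite_range g
  have hcl : IsClosed (convexHull ℝ S) := (hSfin.isCompact_convexHull ℝ).isClosed
  -- 0 is not in the convex hull of S
  have h0 : (0 : Fin m → ℝ) ∉ convexHull ℝ S := by
    intro h0
    rw [convexHull_eq] at h0
    obtain ⟨ι, t, w, z, hw0, hw1, hz, hcm⟩ := h0
    rw [Finset.centerMass_eq_of_sum_1 _ _ hw1] at hcm
    -- t is nonempty, giving a default index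
    have htne : t.Nonempty := by
      rcases Finset.eq_empty_or_nonempty t with ht | ht
      · rw [ht, Finset.sum_empty] at hw1; norm_num at hw1
      · exact ht
    obtain ⟨k0, hk0⟩ := htne
    obtain ⟨q0, _⟩ := hz k0 hk0
    -- choose preimages under g
    have hpre : ∀ k, ∃ q : Fin n ⊕ Fin m, k ∈ t → z k = g q := by
      intro k
      by_cases hk : k ∈ t
      · obtain ⟨q, hq⟩ := hz k hk
        exact ⟨q, fun _ => hq.symm⟩
      · exact ⟨q0, fun hk' => absurd hk' hk⟩
    choose p hp using hpre
    set c : Fin n ⊕ Fin m → ℝ := fun q => ∑ k ∈ t.filter (fun k => p k = q), w k with hc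
    have hcnn : ∀ q, 0 ≤ c q := by
      intro q
      exact Finset.sum_nonneg fun k hk => hw0 k (Finset.mem_filter.1 hk).1
    set x : Fin n → ℝ := fun j => c (Sum.inl j) with hx
    set s : Fin m → ℝ := fun i => c (Sum.inr i) with hs
    -- key identity: 0 = ∑ q, c q • g q
    have key : (0 : Fin m → ℝ) = ∑ q : Fin n ⊕ Fin m, c q • g q := by
      rw [← hcm]
      rw [← Finset.sum_fiberwise t p (fun k => w k • z k)]
      refine Finset.sum_congr rfl fun q _ => ?_
      rw [hc, Finset.sum_smul]
      refine Finset.sum_congr rfl fun k hk => ?_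
      obtain ⟨hkt, hkq⟩ := Finset.mem_filter.1 hk
      rw [hp k hkt, hkq]
    have key2 : (0 : Fin m → ℝ) =
        (∑ j : Fin n, x j • fun i => A i j) + ∑ i : Fin m, s i • (Pi.single i 1 : Fin m → ℝ) := by
      rw [key, Fintype.sum_sum_type]
      rfl
    -- coordinatewise
    have key3 : ∀ i, A.mulVec x i + s i = 0 := by
      intro i
      have := congrFun key2 i
      simp only [Pi.add_apply, Finset.sum_apply, Pi.smul_apply, smul_eq_mul, Pi.zero_apply,
        Pi.single_apply] at this
      have hsum : ∑ i' : Fin m, s i' * (if i = i' then (1 : ℝ) else 0) = s i := by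
        simp [mul_ite]
      rw [hsum] at this
      rw [Matrix.mulVec, dotProduct]
      rw [show ∑ j, A i j * x j = ∑ j, x j * A i j from
        Finset.sum_congr rfl fun j _ => mul_comm _ _]
      exact this.symm
    have hxnn : ∀ j, 0 ≤ x j := fun j => hcnn (Sum.inl j)
    have hsnn : ∀ i, 0 ≤ s i := fun i => hcnn (Sum.inr i)
    have hAx : ∀ i, A.mulVec x i ≤ 0 := by
      intro i
      have := key3 i
      linarith [hsnn i]
    have hx0 : x = 0 := h x hxnn hAx
    have hs0 : ∀ i, s i = 0 := by
      intro i
      have := key3 i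
      rw [hx0] at this
      simpa [Matrix.mulVec] using this
    -- contradiction with ∑ w = 1
    have : (1 : ℝ) = 0 := by
      rw [← hw1, ← Finset.sum_fiberwise t p w]
      rw [Fintype.sum_sum_type]
      have h1 : ∀ j : Fin n, c (Sum.inl j) = 0 := fun j => by
        have := congrFun hx0 j; simpa [hx] using this
      have h2 : ∀ i : Fin m, c (Sum.inr i) = 0 := fun i => hs0 i
      simp only [hc] at h1 h2 ⊢
      rw [Finset.sum_congr rfl fun j _ => h1 j, Finset.sum_congr rfl fun i _ => h2 i]
      simp
    norm_num at this
  -- strict separation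
  obtain ⟨f, cc, hc1, hc2⟩ := geometric_hahn_banach_point_closed (convex_convexHull ℝ S) hcl h0
  have hcc : 0 < cc := by simpa using hc1
  have hmem : ∀ q, g q ∈ convexHull ℝ S :=
    fun q => subset_convexHull ℝ S ⟨q, rfl⟩
  refine ⟨fun i => f (Pi.single i 1), ?_, ?_⟩
  · intro i
    have := hc2 _ (hmem (Sum.inr i))
    simpa [hg] using lt_trans hcc this
  · intro j
    have hcol : (fun i => A i j) = ∑ i : Fin m, A i j • (Pi.single i 1 : Fin m → ℝ) := by
      funext i'
      simp [Pi.single_apply, mul_ite]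
    have hf : f (fun i => A i j) = ∑ i : Fin m, A i j * f (Pi.single i 1) := by
      rw [hcol, map_sum]
      simp
    have hgt := hc2 _ (hmem (Sum.inl j))
    simp only [hg, Sum.elim_inl] at hgt
    have : A.transpose.mulVec (fun i => f (Pi.single i 1)) j
        = ∑ i : Fin m, A i j * f (Pi.single i 1) := by
      rw [Matrix.mulVec, dotProduct]
      exact Finset.sum_congr rfl fun i _ => by rw [Matrix.transpose_apply]
    rw [this, ← hf]
    exact lt_trans hcc hgt
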